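/- arXiv:0905.0380 — 4 statements merged into one kernel-verified Lean document; each statement's English description precedes it below -/
import Mathlib

section
/- Let N = C₄ × C₂ = ⟨a, b : a⁴ = b² = 1, ab = ba⟩, let H = N × ⟨c : c² = 1⟩ be the direct product, and let H' = N ⋊ ⟨c : c² = 1⟩ be the semidirect product in which c acts on N by a ↦ a and b ↦ a²b. Then H and H' are non-isomorphic groups of order 16, and for every divisor d of 16 the number of elements of order d in H equals the number of elements of order d in H'. -/
open Subgroup

abbrev Idx := ZMod 4 × ZMod 2 × ZMod 2

def fw {G : Type*} [Group G] (A B C : G) (v : Idx) : G :=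
  A ^ v.1.val * (B ^ v.2.1.val * C ^ v.2.2.val)

def ordFun (e : ℕ) (v : Idx) : ℕ :=
  if v = 0 then 1
  else if (v.1.val + e * (v.2.1.val * v.2.2.val)) % 2 = 0 then 2 else 4

theorem aux_main {G : Type*} [Group G] {A B C : G} {e : ℕ}
    (hA : A ^ 4 = 1) (hB : B ^ 2 = 1) (hC : C ^ 2 = 1)
    (hAB : A * B = B * A) (hAC : A * C = C * A)
    (hCB : C * B = A ^ (2 * e) * (B * C))
    (hgen : Subgroup.closure {A, B, C} = (⊤ : Subgroup G))
    (hcard : Nat.card G = 16) :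
    (A ^ 2 ≠ 1) ∧ ∀ d : ℕ,
      Nat.card {x : G // orderOf x = d} = Nat.card {v : Idx // ordFun e v = d} := by
  -- power reduction lemmas
  have apow : ∀ n : ℕ, A ^ n = A ^ (n % 4) := by
    intro n
    conv_lhs => rw [← Nat.div_add_mod n 4]
    rw [pow_add, pow_mul, hA, one_pow, one_mul]
  have apow_congr : ∀ m n : ℕ, m % 4 = n % 4 → A ^ m = A ^ n := by
    intro m n h; rw [apow m, apow n, h]
  have bpow_congr : ∀ m n : ℕ, m % 2 = n % 2 → B ^ m = B ^ n := by
    intro m n h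
    have key : ∀ r : ℕ, B ^ r = B ^ (r % 2) := by
      intro r
      conv_lhs => rw [← Nat.div_add_mod r 2]
      rw [pow_add, pow_mul, hB, one_pow, one_mul]
    rw [key m, key n, h]
  have cpow_congr : ∀ m n : ℕ, m % 2 = n % 2 → C ^ m = C ^ n := by
    intro m n h
    have key : ∀ r : ℕ, C ^ r = C ^ (r % 2) := by
      intro r
      conv_lhs => rw [← Nat.div_add_mod r 2]
      rw [pow_add, pow_mul, hC, one_pow, one_mul]
    rw [key m, key n, h]
  -- A is central
  have memcomm : ∀ y ∈ ({A, B, C} : Set G), Commute A y := by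
    intro y hy
    simp only [Set.mem_insert_iff, Set.mem_singleton_iff] at hy
    rcases hy with rfl | rfl | rfl
    · exact Commute.refl _
    · exact hAB
    · exact hAC
  have centA : ∀ x : G, A * x = x * A := by
    intro x
    have hx : x ∈ Subgroup.closure {A, B, C} := by rw [hgen]; trivial
    have : Commute A x := by
      induction hx using Subgroup.closure_induction with
      | mem y hy => exact memcomm y hy
      | one => exact Commute.one_right A
      | mul x y hx hy ihx ihy => exact ihx.mul_right ihy
      | inv x hx ih => exact ih.inv_right
    exact this
  have centApow : ∀ (m : ℕ) (x : G), A ^ m * x = x * A ^ m := fun m x =>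
    ((show Commute A x from centA x).pow_left m).eq
  -- moving C past powers of B
  have cB : ∀ m : ℕ, C * B ^ m = A ^ (2 * e * m) * (B ^ m * C) := by
    intro m
    induction m with
    | zero => simp
    | succ m ih =>
      calc C * B ^ (m + 1)
          = (C * B) * B ^ m := by rw [pow_succ', ← mul_assoc]
        _ = (A ^ (2 * e) * (B * C)) * B ^ m := by rw [hCB]
        _ = A ^ (2 * e) * (B * (C * B ^ m)) := by simp only [mul_assoc]
        _ = A ^ (2 * e) * (B * (A ^ (2 * e * m) * (B ^ m * C))) := by rw [ih]
        _ = A ^ (2 * e) * ((A ^ (2 * e * m) * B) * (B ^ m * C)) := by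
            rw [centApow (2 * e * m) B]
            simp only [mul_assoc]
        _ = (A ^ (2 * e) * A ^ (2 * e * m)) * ((B * B ^ m) * C) := by
            simp only [mul_assoc]
        _ = A ^ (2 * e * (m + 1)) * (B ^ (m + 1) * C) := by
            rw [← pow_add, ← pow_succ']
            congr 2
            ring
  -- single-generator step lemmas
  have stepA : ∀ v : Idx, A * fw A B C v =
      fw A B C (v.1 + ((1 : ℕ) : ZMod 4), v.2.1, v.2.2) := by
    rintro ⟨i, j, k⟩
    show A * (A ^ i.val * (B ^ j.val * C ^ k.val))
        = A ^ ((i + ((1:ℕ) : ZMod 4)).val) * (B ^ j.val * C ^ k.val)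
    rw [← mul_assoc, ← pow_succ']
    congr 1
    exact apow_congr _ _ (by rw [ZMod.val_add, ZMod.val_natCast]; omega)
  have stepB : ∀ v : Idx, B * fw A B C v =
      fw A B C (v.1, v.2.1 + ((1 : ℕ) : ZMod 2), v.2.2) := by
    rintro ⟨i, j, k⟩
    show B * (A ^ i.val * (B ^ j.val * C ^ k.val))
        = A ^ i.val * (B ^ ((j + ((1:ℕ) : ZMod 2)).val) * C ^ k.val)
    calc B * (A ^ i.val * (B ^ j.val * C ^ k.val))
        = (B * A ^ i.val) * (B ^ j.val * C ^ k.val) := by rw [mul_assoc]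
      _ = A ^ i.val * (B * (B ^ j.val * C ^ k.val)) := by
          rw [← centApow i.val B, mul_assoc]
      _ = A ^ i.val * ((B * B ^ j.val) * C ^ k.val) := by rw [mul_assoc]
      _ = A ^ i.val * (B ^ ((j + ((1:ℕ) : ZMod 2)).val) * C ^ k.val) := by
          rw [← pow_succ']
          congr 2
          exact bpow_congr _ _ (by rw [ZMod.val_add, ZMod.val_natCast]; omega)
  have stepC : ∀ v : Idx, C * fw A B C v =
      fw A B C (v.1 + ((2 * e * v.2.1.val : ℕ) : ZMod 4), v.2.1, v.2.2 + ((1 : ℕ) : ZMod 2)) := by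
    rintro ⟨i, j, k⟩
    show C * (A ^ i.val * (B ^ j.val * C ^ k.val))
        = A ^ ((i + ((2 * e * j.val : ℕ) : ZMod 4)).val)
            * (B ^ j.val * C ^ ((k + ((1:ℕ) : ZMod 2)).val))
    calc C * (A ^ i.val * (B ^ j.val * C ^ k.val))
        = (C * A ^ i.val) * (B ^ j.val * C ^ k.val) := by rw [mul_assoc]
      _ = A ^ i.val * (C * (B ^ j.val * C ^ k.val)) := by
          rw [← centApow i.val C, mul_assoc]
      _ = A ^ i.val * ((C * B ^ j.val) * C ^ k.val) := by rw [mul_assoc]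
      _ = A ^ i.val * ((A ^ (2 * e * j.val) * (B ^ j.val * C)) * C ^ k.val) := by
          rw [cB]
      _ = (A ^ i.val * A ^ (2 * e * j.val)) * (B ^ j.val * (C * C ^ k.val)) := by
          simp only [mul_assoc]
      _ = A ^ ((i + ((2 * e * j.val : ℕ) : ZMod 4)).val)
            * (B ^ j.val * C ^ ((k + ((1:ℕ) : ZMod 2)).val)) := by
          rw [← pow_add, ← pow_succ']
          congr 1
          · exact apow_congr _ _ (by rw [ZMod.val_add, ZMod.val_natCast]; omega)
          · congr 1
            exact cpow_congr _ _ (by rw [ZMod.val_add, ZMod.val_natCast]; omega)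
  have hone : fw A B C 0 = 1 := by
    show A ^ (0 : ZMod 4).val * (B ^ (0 : ZMod 2).val * C ^ (0 : ZMod 2).val) = 1
    norm_num [ZMod.val_zero]
  -- surjectivity
  have hsurj : Function.Surjective (fw A B C) := by
    intro x
    have hx : x ∈ Subgroup.closure {A, B, C} := by rw [hgen]; trivial
    have step : ∀ g ∈ ({A, B, C} : Set G), ∀ y : G,
        (∃ v, fw A B C v = y) → ∃ w, fw A B C w = g * y := by
      intro g hg y ⟨v, hv⟩
      simp only [Set.mem_insert_iff, Set.mem_singleton_iff] at hg
      rcases hg with rfl | rfl | rfl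
      · exact ⟨_, by rw [← hv, stepA v]⟩
      · exact ⟨_, by rw [← hv, stepB v]⟩
      · exact ⟨_, by rw [← hv, stepC v]⟩
    induction hx using Subgroup.closure_induction_left with
    | one => exact ⟨0, hone⟩
    | mul_left g hg y hy ih => exact step g hg y ih
    | inv_mul_cancel g hg y hy ih =>
      have h3 : ∀ z : G, z ∈ ({A, B, C} : Set G) → ∃ n : ℕ, z⁻¹ = z ^ n := by
        intro z hz
        simp only [Set.mem_insert_iff, Set.mem_singleton_iff] at hz
        rcases hz with rfl | rfl | rfl
        · exact ⟨3, inv_eq_of_mul_eq_one_right (by rw [← pow_succ']; exact hA)⟩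
        · exact ⟨1, inv_eq_of_mul_eq_one_right (by rw [pow_one, ← pow_two]; exact hB)⟩
        · exact ⟨1, inv_eq_of_mul_eq_one_right (by rw [pow_one, ← pow_two]; exact hC)⟩
      obtain ⟨n, hn⟩ := h3 g hg
      rw [hn]
      clear hn
      induction n with
      | zero => simpa using ih
      | succ n ihn =>
        obtain ⟨w, hw⟩ := ihn
        rw [pow_succ']
        rw [mul_assoc]
        exact step g hg _ ⟨w, hw⟩
  have hbij : Function.Bijective (fw A B C) := by
    rw [Nat.bijective_iff_surjective_and_card]
    refine ⟨hsurj, ?_⟩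
    rw [hcard]
    simp [Nat.card_prod, Nat.card_zmod]
  -- basic consequences
  have hA2 : A ^ 2 ≠ 1 := by
    intro h
    have h20 : fw A B C (((2 : ℕ) : ZMod 4), 0, 0) = fw A B C 0 := by
      rw [hone]
      show A ^ (((2:ℕ) : ZMod 4)).val * (B ^ (0 : ZMod 2).val * C ^ (0 : ZMod 2).val) = 1
      norm_num [ZMod.val_zero, ZMod.val_natCast]
      exact h
    have := hbij.injective h20
    simp only [Prod.ext_iff] at this
    exact absurd this.1 (by decide)
  -- square of an element
  have sq : ∀ v : Idx, (fw A B C v) ^ 2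
      = A ^ (2 * (v.1.val + e * (v.2.1.val * v.2.2.val))) := by
    rintro ⟨i, j, k⟩
    have hBC2 : (B ^ j.val * C ^ k.val) * (B ^ j.val * C ^ k.val)
        = A ^ (2 * (e * (j.val * k.val))) := by
      have hk : k.val = 0 ∨ k.val = 1 := by
        have := ZMod.val_lt k; omega
      rcases hk with hk | hk
      · rw [hk]
        simp only [pow_zero, mul_one, Nat.mul_zero]
        rw [← pow_add, bpow_congr (j.val + j.val) 0 (by omega)]
        simp
      · rw [hk, pow_one, Nat.mul_one]
        calc (B ^ j.val * C) * (B ^ j.val * C)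
            = B ^ j.val * ((C * B ^ j.val) * C) := by simp only [mul_assoc]
          _ = B ^ j.val * ((A ^ (2 * e * j.val) * (B ^ j.val * C)) * C) := by rw [cB]
          _ = (B ^ j.val * A ^ (2 * e * j.val)) * (B ^ j.val * (C * C)) := by
              simp only [mul_assoc]
          _ = (A ^ (2 * e * j.val) * B ^ j.val) * (B ^ j.val * (C * C)) := by
              rw [← centApow (2 * e * j.val) (B ^ j.val)]
          _ = A ^ (2 * e * j.val) * ((B ^ j.val * B ^ j.val) * (C * C)) := by
              simp only [mul_assoc]
          _ = A ^ (2 * e * j.val) := by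
              rw [← pow_add, ← pow_two,
                bpow_congr (j.val + j.val) 0 (by omega), pow_zero, hC, one_mul, mul_one]
          _ = A ^ (2 * (e * j.val)) := by rw [mul_assoc]
    show (A ^ i.val * (B ^ j.val * C ^ k.val)) ^ 2 = _
    rw [pow_two]
    set Y := B ^ j.val * C ^ k.val with hY
    calc (A ^ i.val * Y) * (A ^ i.val * Y)
        = A ^ i.val * ((Y * A ^ i.val) * Y) := by simp only [mul_assoc]
      _ = A ^ i.val * ((A ^ i.val * Y) * Y) := by rw [← centApow i.val Y]
      _ = (A ^ i.val * A ^ i.val) * (Y * Y) := by simp only [mul_assoc]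
      _ = A ^ (2 * (i.val + e * (j.val * k.val))) := by
          rw [hY, hBC2, ← pow_add, ← pow_add]
          exact apow_congr _ _ (by omega)
  -- order of each element
  have horder : ∀ v : Idx, orderOf (fw A B C v) = ordFun e v := by
    intro v
    unfold ordFun
    by_cases hv : v = 0
    · rw [if_pos hv, hv, hone, orderOf_one]
    · rw [if_neg hv]
      have hne1 : fw A B C v ≠ 1 := by
        intro h
        exact hv (hbij.injective (h.trans hone.symm))
      set n := v.1.val + e * (v.2.1.val * v.2.2.val) with hn
      have hsqn : (fw A B C v) ^ 2 = A ^ (2 * n) := sq v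
      have h4 : (fw A B C v) ^ 4 = 1 := by
        have h42 : (4 : ℕ) = 2 * 2 := by norm_num
        rw [h42, pow_mul, hsqn, ← pow_mul, apow_congr (2 * n * 2) 0 (by omega), pow_zero]
      by_cases hpar : n % 2 = 0
      · rw [if_pos hpar]
        apply orderOf_eq_prime
        · rw [hsqn, apow_congr (2 * n) 0 (by omega), pow_zero]
        · exact hne1
      · rw [if_neg hpar]
        have hsq2 : (fw A B C v) ^ 2 = A ^ 2 := by
          rw [hsqn]
          exact apow_congr _ _ (by omega)
        have hdvd : orderOf (fw A B C v) ∣ 2 ^ 2 :=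
          (by norm_num : (2:ℕ) ^ 2 = 4) ▸ orderOf_dvd_of_pow_eq_one h4
        obtain ⟨t, ht, hdd⟩ := (Nat.dvd_prime_pow Nat.prime_two).mp hdvd
        interval_cases t
        · rw [pow_zero] at hdd
          exact absurd (orderOf_eq_one_iff.mp hdd) hne1
        · rw [pow_one] at hdd
          exfalso
          apply hA2
          rw [← hsq2, ← hdd, pow_orderOf_eq_one]
        · rw [hdd]; norm_num
  -- counting
  refine ⟨hA2, fun d => ?_⟩
  exact (Nat.card_congr (Equiv.subtypeEquiv (Equiv.ofBijective _ hbij)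
    (fun v => by rw [show (Equiv.ofBijective _ hbij) v = fw A B C v from rfl, horder]))).symm

theorem count_eq (d : ℕ) (hd : d ≤ 16) :
    Nat.card {v : Idx // ordFun 0 v = d} = Nat.card {v : Idx // ordFun 1 v = d} := by
  rw [Nat.card_eq_fintype_card, Nat.card_eq_fintype_card]
  interval_cases d <;> decide



/-- Hypotheses pinning down `H ≅ C₄ × C₂ × C₂ = ⟨a,b,c : a⁴ = b² = c² = 1, all commute⟩`:
a group of order 16 generated by elements `a, b, c` satisfying these relations is
isomorphic to `C₄ × C₂ × C₂`. -/
structure IsC4xC2xC2 {H : Type*} [Group H] (a b c : H) : Prop where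
  card : Nat.card H = 16
  ha : a ^ 4 = 1
  hb : b ^ 2 = 1
  hc : c ^ 2 = 1
  hab : a * b = b * a
  hac : a * c = c * a
  hbc : c * b = b * c
  gen : Subgroup.closure {a, b, c} = ⊤

/-- Hypotheses pinning down `H' ≅ (C₄ × C₂) ⋊ C₂ = ⟨a,b,c : a⁴ = b² = c² = 1, ab = ba,
ac = ca, cbc⁻¹ = a²b⟩`, the semidirect product in which `c` acts on `N = C₄ × C₂` by
`a ↦ a`, `b ↦ a²b`: a group of order 16 generated by elements `a, b, c` satisfying these
relations is isomorphic to this semidirect product. -/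
structure IsC4xC2SemidirectC2 {H : Type*} [Group H] (a b c : H) : Prop where
  card : Nat.card H = 16
  ha : a ^ 4 = 1
  hb : b ^ 2 = 1
  hc : c ^ 2 = 1
  hab : a * b = b * a
  hac : a * c = c * a
  hbc : c * b * c⁻¹ = a ^ 2 * b
  gen : Subgroup.closure {a, b, c} = ⊤

/-- with `N = C₄ × C₂`, the direct product `H = N × C₂` and the semidirect
product `H' = N ⋊ C₂` (where `c` acts by `a ↦ a`, `b ↦ a²b`) are non-isomorphic groups of
order 16 having, for every divisor `d` of 16, the same number of elements of order `d`. -/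
theorem todd_groups_not_isomorphic_same_order_counts
    {H H' : Type*} [Group H] [Group H']
    (a b c : H) (hH : IsC4xC2xC2 a b c)
    (a' b' c' : H') (hH' : IsC4xC2SemidirectC2 a' b' c') :
    (¬ Nonempty (H ≃* H')) ∧
      ∀ d : ℕ, d ∣ 16 →
        Nat.card {x : H // orderOf x = d} = Nat.card {x : H' // orderOf x = d} := by
  obtain ⟨hcard, ha, hb, hc, hab, hac, hbc, hgen⟩ := hH
  obtain ⟨hcard', ha', hb', hc', hab', hac', hbc', hgen'⟩ := hH'
  have hCB : c * b = a ^ (2 * 0) * (b * c) := by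
    rw [Nat.mul_zero, pow_zero, one_mul]; exact hbc
  have hCB' : c' * b' = a' ^ (2 * 1) * (b' * c') := by
    have hcinv : c'⁻¹ = c' := inv_eq_of_mul_eq_one_right (by rw [← pow_two]; exact hc')
    calc c' * b' = (c' * b' * c'⁻¹) * c' := by
          rw [mul_assoc (c' * b'), hcinv, ← pow_two, hc', mul_one]
      _ = (a' ^ 2 * b') * c' := by rw [hbc']
      _ = a' ^ (2 * 1) * (b' * c') := by rw [mul_assoc]
  obtain ⟨hA2, hcount⟩ := aux_main ha hb hc hab hac hCB hgen hcard
  obtain ⟨hA2', hcount'⟩ := aux_main ha' hb' hc' hab' hac' hCB' hgen' hcard'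
  constructor
  · rintro ⟨φ⟩
    have memcomm3 : ∀ g ∈ ({a, b, c} : Set H), ∀ x : H, Commute g x := by
      intro g hg x
      have hx : x ∈ Subgroup.closure {a, b, c} := by rw [hgen]; trivial
      have : Commute g x := by
        induction hx using Subgroup.closure_induction with
        | mem y hy =>
          simp only [Set.mem_insert_iff, Set.mem_singleton_iff] at hg hy
          rcases hg with rfl | rfl | rfl <;> rcases hy with rfl | rfl | rfl <;>
            first
              | exact Commute.refl _
              | exact hab
              | exact (Commute.eq hab).symm ▸ hab.symm
              | exact hab.symm
              | exact hac
              | exact hac.symm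
              | exact hbc
              | exact hbc.symm
        | one => exact Commute.one_right g
        | mul u v hu hv ihu ihv => exact ihu.mul_right ihv
        | inv u hu ih => exact ih.inv_right
      exact this
    have comm : ∀ x y : H, x * y = y * x := by
      intro x y
      have hx : x ∈ Subgroup.closure {a, b, c} := by rw [hgen]; trivial
      have : Commute x y := by
        induction hx using Subgroup.closure_induction with
        | mem z hz => exact memcomm3 z hz y
        | one => exact Commute.one_left y
        | mul u v hu hv ihu ihv => exact ihu.mul_left ihv
        | inv u hu ih => exact ih.inv_left
      exact this
    have hcomm' : c' * b' = b' * c' := by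
      have h := comm (φ.symm c') (φ.symm b')
      have h2 := congrArg φ h
      simpa [map_mul] using h2
    apply hA2'
    have h3 : a' ^ (2 * 1) * (b' * c') = 1 * (b' * c') := by
      rw [one_mul, ← hCB', hcomm']
    have := mul_right_cancel h3
    simpa using this
  · intro d hd
    rw [hcount d, hcount' d]
    exact count_eq d (Nat.le_of_dvd (by norm_num) hd)
end

section
/- Let N = C₄ × C₂ = ⟨a, b : a⁴ = b² = 1, ab = ba⟩, let H = N × ⟨c : c² = 1⟩, and let H' = N ⋊ ⟨c : c² = 1⟩ where c acts on N by a ↦ a and b ↦ a²b; both H and H' have order 16. Then the images of H and H' under regular embeddings into the symmetric group Perm(Fin 16) are Gassmann-Sunada equivalent but NOT jump equivalent. In fact, the elements of order dividing 2 generate a subgroup of index 2 in H, whereas the elements of order dividing 2 generate all of H'. -/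
/-- A subset `S` of a group is conjugation-stable if `gSg⁻¹ = S` for all `g`. -/
def ConjStable {G : Type*} [Group G] (S : Set G) : Prop :=
  ∀ g : G, (fun x => g * x * g⁻¹) '' S = S

/-- Subgroups `H, H'` of `G` are jump equivalent if for all conjugation-stable
subsets `S, T` of `G`, `⟨H ∩ S⟩ = ⟨H ∩ T⟩ ↔ ⟨H' ∩ S⟩ = ⟨H' ∩ T⟩`. -/
def JumpEquivalent {G : Type*} [Group G] (H H' : Subgroup G) : Prop :=
  ∀ S T : Set G, ConjStable S → ConjStable T →
    (Subgroup.closure ((H : Set G) ∩ S) = Subgroup.closure ((H : Set G) ∩ T) ↔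
     Subgroup.closure ((H' : Set G) ∩ S) = Subgroup.closure ((H' : Set G) ∩ T))

/-- Subgroups `H, H'` of `G` are order equivalent if `#⟨H ∩ S⟩ = #⟨H' ∩ S⟩` for every
conjugation-stable subset `S` of `G`. -/
def OrderEquivalent {G : Type*} [Group G] (H H' : Subgroup G) : Prop :=
  ∀ S : Set G, ConjStable S →
    Nat.card (Subgroup.closure ((H : Set G) ∩ S)) =
      Nat.card (Subgroup.closure ((H' : Set G) ∩ S))

/-- Subgroups `H, H'` of `G` are Gassmann-Sunada equivalent if `#(H ∩ S) = #(H' ∩ S)` for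
every conjugation-stable subset `S` of `G`. -/
def GassmannEquivalent {G : Type*} [Group G] (H H' : Subgroup G) : Prop :=
  ∀ S : Set G, ConjStable S →
    Set.ncard ((H : Set G) ∩ S) = Set.ncard ((H' : Set G) ∩ S)

/-- Subgroups `H, H'` of `G` are Kronecker equivalent if for every conjugation-stable subset
`S` of `G`, `H ∩ S = ∅ ↔ H' ∩ S = ∅`. -/
def KroneckerEquivalent {G : Type*} [Group G] (H H' : Subgroup G) : Prop :=
  ∀ S : Set G, ConjStable S → ((H : Set G) ∩ S = ∅ ↔ (H' : Set G) ∩ S = ∅)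

/-- The regular embedding of a group `K` with a bijection `e : K ≃ Fin n` into the symmetric
group `Perm (Fin n)`: the action of `K` on itself by left multiplication, transported along
`e`. -/
def regularEmbedding {K : Type*} [Group K] {n : ℕ} (e : K ≃ Fin n) :
    K →* Equiv.Perm (Fin n) where
  toFun k := (e.symm.trans (Equiv.mulLeft k)).trans e
  map_one' := by
    ext x
    simp
  map_mul' k k' := by
    ext x
    simp [mul_assoc]

set_option maxHeartbeats 1000000

section AuxTodd

open Subgroup

/-! ### Generic conjugacy of regular embeddings -/

/-- coset-times-power decomposition map. -/
noncomputable def Fm {G : Type*} [Group G] (x : G) (d : ℕ) :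
    (G ⧸ Subgroup.zpowers x) × ZMod d → G :=
  fun pi => pi.1.out * x ^ pi.2.val

lemma Fm_step {G : Type*} [Group G] (x : G) {d : ℕ} (hd : orderOf x = d) (hd0 : d ≠ 0)
    (p : G ⧸ Subgroup.zpowers x) (i : ZMod d) :
    Fm x d (p, i) * x = Fm x d (p, i + 1) := by
  haveI : NeZero d := ⟨hd0⟩
  have hx : x ^ ((i + 1).val) = x ^ (i.val + 1) := by
    rw [pow_eq_pow_iff_modEq, hd, ← ZMod.natCast_eq_natCast_iff]
    push_cast
    simp [ZMod.natCast_val, ZMod.cast_id]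
  simp only [Fm, hx, pow_succ, mul_assoc]

lemma Fm_bij {G : Type*} [Group G] [Finite G] (x : G) {d : ℕ} (hd : orderOf x = d) :
    Function.Bijective (Fm x d) := by
  haveI : NeZero d := ⟨hd ▸ (orderOf_pos x).ne'⟩
  constructor
  · rintro ⟨p, i⟩ ⟨q, j⟩ hpq
    have hmem : ∀ (r : G ⧸ Subgroup.zpowers x) (k : ZMod d),
        QuotientGroup.mk (Fm x d (r, k)) = r := by
      intro r k
      exact (QuotientGroup.mk_mul_of_mem r.out (pow_mem (Subgroup.mem_zpowers x) k.val)).trans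
        (QuotientGroup.out_eq' r)
    have hp : p = q := by rw [← hmem p i, ← hmem q j, hpq]
    subst hp
    have : x ^ i.val = x ^ j.val := mul_left_cancel hpq
    rw [pow_eq_pow_iff_modEq, hd, Nat.ModEq,
      Nat.mod_eq_of_lt i.val_lt, Nat.mod_eq_of_lt j.val_lt] at this
    exact Prod.ext rfl (ZMod.val_injective d this)
  · intro g
    obtain ⟨h, hh⟩ := QuotientGroup.mk_out_eq_mul (Subgroup.zpowers x) g
    obtain ⟨m, hm⟩ := (Submonoid.mem_powers_iff _ _).1
      (mem_powers_iff_mem_zpowers.2 h⁻¹.2)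
    refine ⟨(QuotientGroup.mk g, (m : ZMod d)), ?_⟩
    have : x ^ ((m : ZMod d)).val = x ^ m := by
      rw [ZMod.val_natCast, ← pow_eq_pow_mod m (by rw [← hd]; exact pow_orderOf_eq_one x)]
    simp only [Fm, this, hm, hh]
    simp [mul_assoc]

theorem isConj_regularEmbedding {G G' : Type*} [Group G] [Group G'] [Finite G] [Finite G']
    {n : ℕ} (e : G ≃ Fin n) (e' : G' ≃ Fin n)
    {x : G} {x' : G'} (h : orderOf x = orderOf x') :
    IsConj (regularEmbedding e x) (regularEmbedding e' x') := by
  set d := orderOf x with hdx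
  have hdx' : orderOf x' = d := h.symm
  have hd0 : d ≠ 0 := (orderOf_pos x).ne'
  have hq : Nat.card (G ⧸ Subgroup.zpowers x) = Nat.card (G' ⧸ Subgroup.zpowers x') := by
    have h1 := Subgroup.card_eq_card_quotient_mul_card_subgroup (Subgroup.zpowers x)
    have h2 := Subgroup.card_eq_card_quotient_mul_card_subgroup (Subgroup.zpowers x')
    have hG : Nat.card G = n := by
      rw [Nat.card_congr e, Nat.card_eq_fintype_card, Fintype.card_fin]
    have hG' : Nat.card G' = n := by
      rw [Nat.card_congr e', Nat.card_eq_fintype_card, Fintype.card_fin]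
    rw [Nat.card_zpowers] at h1 h2
    rw [hG, ← hdx] at h1
    rw [hG', hdx'] at h2
    exact Nat.eq_of_mul_eq_mul_right (Nat.pos_of_ne_zero hd0) (h1.symm.trans h2)
  haveI : Fintype (G ⧸ Subgroup.zpowers x) := Fintype.ofFinite _
  haveI : Fintype (G' ⧸ Subgroup.zpowers x') := Fintype.ofFinite _
  have hq' : Fintype.card (G ⧸ Subgroup.zpowers x)
      = Fintype.card (G' ⧸ Subgroup.zpowers x') := by
    rwa [← Nat.card_eq_fintype_card, ← Nat.card_eq_fintype_card]
  let q := Fintype.equivOfCardEq hq'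
  let E : (G ⧸ Subgroup.zpowers x) × ZMod d ≃ G := Equiv.ofBijective _ (Fm_bij x rfl)
  let E' : (G' ⧸ Subgroup.zpowers x') × ZMod d ≃ G' := Equiv.ofBijective _ (Fm_bij x' hdx')
  let θ : G ≃ G' := (Equiv.inv G).trans <| E.symm.trans <|
    (q.prodCongr (Equiv.refl (ZMod d))).trans <| E'.trans (Equiv.inv G')
  have hθ : ∀ g : G, θ (x * g) = x' * θ g := by
    intro g
    obtain ⟨⟨p, i⟩, hpi⟩ : ∃ pi, E pi = g⁻¹ := ⟨E.symm g⁻¹, E.apply_symm_apply _⟩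
    have h1 : E.symm g⁻¹ = (p, i) := by rw [← hpi, E.symm_apply_apply]
    have h2 : E.symm (x * g)⁻¹ = (p, i - 1) := by
      rw [Equiv.symm_apply_eq]
      have key : Fm x d (p, i - 1) = (x * g)⁻¹ := by
        have := Fm_step x rfl hd0 p (i - 1)
        rw [sub_add_cancel] at this
        have hpe : Fm x d (p, i) = g⁻¹ := hpi
        rw [mul_inv_rev, ← hpe, ← this, mul_assoc, mul_inv_cancel, mul_one]
      exact key.symm
    have expand : ∀ g₀ : G, θ g₀ = (Fm x' d (q (E.symm g₀⁻¹).1, (E.symm g₀⁻¹).2))⁻¹ := by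
      intro g₀; rfl
    rw [expand, expand, h1, h2]
    have := Fm_step x' hdx' hd0 (q p) (i - 1)
    rw [sub_add_cancel] at this
    rw [← this]
    simp [mul_inv_rev]
  refine isConj_iff.2 ⟨(e.symm.trans θ).trans e', ?_⟩
  ext z
  simp only [Equiv.Perm.mul_apply, regularEmbedding, MonoidHom.coe_mk, OneHom.coe_mk,
    Equiv.trans_apply, Equiv.symm_trans_apply, Equiv.symm_symm, Equiv.Perm.inv_def,
    Equiv.coe_mulLeft]
  simp [hθ]

/-! ### The two model groups of order 16 -/

def T16 := ZMod 4 × ZMod 2 × ZMod 2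

namespace T16
instance : DecidableEq T16 := inferInstanceAs (DecidableEq (ZMod 4 × ZMod 2 × ZMod 2))
instance : Fintype T16 := inferInstanceAs (Fintype (ZMod 4 × ZMod 2 × ZMod 2))
def twist (k j : ZMod 2) : ZMod 4 := ((2 * (k.val * j.val) : ℕ) : ZMod 4)
lemma twist_zero_left : ∀ j, twist 0 j = 0 := by decide
lemma twist_zero_right : ∀ k, twist k 0 = 0 := by decide
lemma twist_add_left : ∀ a b c, twist (a + b) c = twist a c + twist b c := by decide
lemma twist_add_right : ∀ a b c, twist a (b + c) = twist a b + twist a c := by decide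
lemma z2_add_self : ∀ a : ZMod 2, a + a = 0 := by decide
instance : One T16 := ⟨((0 : ZMod 4), (0 : ZMod 2), (0 : ZMod 2))⟩
instance : Mul T16 :=
  ⟨fun x y => (x.1 + y.1 + twist x.2.2 y.2.1, x.2.1 + y.2.1, x.2.2 + y.2.2)⟩
instance : Inv T16 := ⟨fun x => (-(x.1 + twist x.2.2 x.2.1), x.2.1, x.2.2)⟩
lemma mul_def (x y : T16) :
    x * y = (x.1 + y.1 + twist x.2.2 y.2.1, x.2.1 + y.2.1, x.2.2 + y.2.2) := rfl
instance : Group T16 where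
  mul_assoc x y z := by
    show ((_,_,_) : T16) = (_,_,_)
    simp only [mul_def, twist_add_left, twist_add_right]
    refine Prod.ext ?_ (Prod.ext ?_ ?_) <;> simp <;> ring
  one_mul x := by
    show ((0 + x.1 + twist 0 x.2.1, _, _) : T16) = x
    rw [twist_zero_left]
    show ((0 + x.1 + 0, (0 : ZMod 2) + x.2.1, (0 : ZMod 2) + x.2.2) : T16) = x
    simp
    rfl
  mul_one x := by
    show ((x.1 + 0 + twist x.2.2 0, _, _) : T16) = x
    rw [twist_zero_right]
    show ((x.1 + 0 + 0, x.2.1 + (0 : ZMod 2), x.2.2 + (0 : ZMod 2)) : T16) = x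
    simp
    rfl
  inv_mul_cancel x := by
    show ((-(x.1 + twist x.2.2 x.2.1) + x.1 + twist x.2.2 x.2.1, x.2.1 + x.2.1,
      x.2.2 + x.2.2) : T16) = (1 : T16)
    rw [z2_add_self, z2_add_self]
    show ((_, 0, 0) : T16) = ((0,0,0) : T16)
    refine Prod.ext ?_ rfl
    simp
end T16

abbrev M16 := Multiplicative (ZMod 4 × ZMod 2 × ZMod 2)

lemma M16_pow4 : ∀ x : M16, x ^ 4 = 1 := by decide
lemma T16_pow4 : ∀ x : T16, x ^ 4 = 1 := by decide

def bM : M16 ≃ T16 where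
  toFun m :=
    if m.toAdd.2.1 = 1 ∧ m.toAdd.2.2 = 1 then
      (m.toAdd.1 + 1, m.toAdd.2.1, m.toAdd.2.2) else m.toAdd
  invFun t :=
    Multiplicative.ofAdd (if t.2.1 = 1 ∧ t.2.2 = 1 then (t.1 - 1, t.2.1, t.2.2) else t)
  left_inv := by decide
  right_inv := by decide

lemma bM_one : ∀ m : M16, (bM m = 1 ↔ m = 1) := by decide
lemma bM_sq : ∀ m : M16, ((bM m) ^ 2 = 1 ↔ m ^ 2 = 1) := by decide

lemma orderOf_eq_four_of {K : Type*} [Group K] (y : K) (hy4 : y ^ 4 = 1)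
    (hy2 : y ^ 2 ≠ 1) : orderOf y = 4 := by
  have hdvd : orderOf y ∣ 4 := orderOf_dvd_of_pow_eq_one hy4
  have hnd : ¬ orderOf y ∣ 2 := fun h => hy2 (orderOf_dvd_iff_pow_eq_one.1 h)
  obtain ⟨d, hd⟩ : ∃ d, orderOf y = d := ⟨_, rfl⟩
  rw [hd] at hdvd hnd ⊢
  have hle : d ≤ 4 := Nat.le_of_dvd (by norm_num) hdvd
  interval_cases d <;> first | rfl | (exfalso; revert hdvd hnd; decide)

lemma orderOf_eq_of {G G' : Type*} [Group G] [Group G'] {x : G} {x' : G'}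
    (h4 : x ^ 4 = 1) (h4' : x' ^ 4 = 1) (h1 : x = 1 ↔ x' = 1)
    (h2 : x ^ 2 = 1 ↔ x' ^ 2 = 1) : orderOf x = orderOf x' := by
  by_cases hx1 : x = 1
  · simp [hx1, h1.1 hx1]
  · have hx1' : x' ≠ 1 := fun h => hx1 (h1.2 h)
    by_cases hx2 : x ^ 2 = 1
    · haveI : Fact (Nat.Prime 2) := ⟨by norm_num⟩
      rw [orderOf_eq_prime hx2 hx1, orderOf_eq_prime (h2.1 hx2) hx1']
    · have hx2' : x' ^ 2 ≠ 1 := fun h => hx2 (h2.2 h)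
      exact (orderOf_eq_four_of x h4 hx2).trans (orderOf_eq_four_of x' h4' hx2').symm

def K₀ : Subgroup M16 where
  carrier := {m : M16 | m ^ 2 = 1}
  one_mem' := by decide
  mul_mem' := fun {x} {y} hx hy =>
    (by decide : ∀ x y : M16, x ^ 2 = 1 → y ^ 2 = 1 → (x * y) ^ 2 = 1) x y hx hy
  inv_mem' := fun {x} hx =>
    (by decide : ∀ x : M16, x ^ 2 = 1 → x⁻¹ ^ 2 = 1) x hx

instance : DecidablePred (· ∈ K₀) := fun m => inferInstanceAs (Decidable (m ^ 2 = 1))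

lemma K₀_mem (m : M16) : m ∈ K₀ ↔ m ^ 2 = 1 := Iff.rfl

lemma K₀_index : K₀.index = 2 := by
  have h1 := Subgroup.card_mul_index K₀
  have h2 : Nat.card K₀ = 8 := by
    rw [Nat.card_eq_fintype_card]
    decide
  have h3 : Nat.card M16 = 16 := by
    rw [Nat.card_eq_fintype_card]
    decide
  rw [h2, h3] at h1
  omega

/-! ### recognizing the abstract groups -/

lemma comm_of_gen {H : Type*} [Group H] {a b c : H}
    (hab : a * b = b * a) (hac : a * c = c * a) (hbc : c * b = b * c)
    (gen : Subgroup.closure {a, b, c} = ⊤) : ∀ x y : H, x * y = y * x := by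
  have habc : ∀ u ∈ ({a,b,c} : Set H), ∀ v ∈ ({a,b,c} : Set H), u * v = v * u := by
    simp only [Set.mem_insert_iff, Set.mem_singleton_iff]
    rintro u (rfl|rfl|rfl) v (rfl|rfl|rfl) <;>
      first | rfl | exact hab | exact hab.symm | exact hac | exact hac.symm
            | exact hbc | exact hbc.symm
  have key : ∀ S : Set H, ({a,b,c} : Set H) ⊆ Subgroup.centralizer S →
      ∀ x : H, x ∈ Subgroup.centralizer S := by
    intro S hS x
    have hle : (⊤ : Subgroup H) ≤ Subgroup.centralizer S := by
      rw [← gen]; exact (Subgroup.closure_le _).2 hS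
    exact hle (Subgroup.mem_top x)
  intro x y
  have hx : x ∈ Subgroup.centralizer {a,b,c} :=
    key _ (fun u hu => Subgroup.mem_centralizer_iff.2 (fun v hv => habc v hv u hu)) x
  have hy : y ∈ Subgroup.centralizer {x} := by
    refine key {x} ?_ y
    intro u hu
    refine Subgroup.mem_centralizer_iff.2 ?_
    rintro v rfl
    exact (Subgroup.mem_centralizer_iff.1 hx u hu).symm
  exact Subgroup.mem_centralizer_iff.1 hy x rfl

lemma pow_val_eq {H : Type*} [Group H] {a : H} {n : ℕ} [NeZero n] (ha : a ^ n = 1)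
    (z : ZMod n) (m : ℕ) (hm : (m : ZMod n) = z) : a ^ z.val = a ^ m := by
  rw [pow_eq_pow_iff_modEq]
  refine Nat.ModEq.of_dvd (orderOf_dvd_of_pow_eq_one ha) ?_
  rw [← ZMod.natCast_eq_natCast_iff]
  rw [ZMod.natCast_val, ZMod.cast_id, hm]

lemma reorder3 {H : Type*} [Group H] {a b c : H}
    (hab : Commute a b) (hac : Commute a c) (hbc : Commute b c) (p q r p' q' r' : ℕ) :
    (a ^ p * b ^ q * c ^ r) * (a ^ p' * b ^ q' * c ^ r') =
      a ^ (p + p') * b ^ (q + q') * c ^ (r + r') := by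
  have h1 : Commute (b ^ q * c ^ r) (a ^ p') :=
    ((hab.symm.pow_pow q p').mul_left (hac.symm.pow_pow r p'))
  have h2 : Commute (c ^ r) (b ^ q') := hbc.symm.pow_pow r q'
  calc a ^ p * b ^ q * c ^ r * (a ^ p' * b ^ q' * c ^ r')
      = a ^ p * (b ^ q * c ^ r) * (a ^ p' * (b ^ q' * c ^ r')) := by
        rw [mul_assoc (a ^ p), mul_assoc (a ^ p')]
    _ = a ^ p * a ^ p' * (b ^ q * c ^ r * (b ^ q' * c ^ r')) := h1.mul_mul_mul_comm _ _
    _ = a ^ p * a ^ p' * (b ^ q * b ^ q' * (c ^ r * c ^ r')) := by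
        rw [h2.mul_mul_mul_comm]
    _ = a ^ (p + p') * b ^ (q + q') * c ^ (r + r') := by
        rw [pow_add, pow_add, pow_add]
        simp [mul_assoc]

lemma exists_iso_M16 {H : Type*} [Group H] {a b c : H} (hH : IsC4xC2xC2 a b c)
    (e : H ≃ Fin 16) : Nonempty (M16 ≃* H) := by
  obtain ⟨hcard, ha, hb, hc, hab, hac, hbc, gen⟩ := hH
  let f : M16 → H := fun m =>
    a ^ (m.toAdd.1.val) * b ^ (m.toAdd.2.1.val) * c ^ (m.toAdd.2.2.val)
  have hf1 : f 1 = 1 := by simp [f]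
  have hfmul : ∀ m m' : M16, f (m * m') = f m * f m' := by
    intro m m'
    show a ^ ((m.toAdd.1 + m'.toAdd.1).val) * b ^ ((m.toAdd.2.1 + m'.toAdd.2.1).val)
        * c ^ ((m.toAdd.2.2 + m'.toAdd.2.2).val) = _
    rw [pow_val_eq ha _ (m.toAdd.1.val + m'.toAdd.1.val) (by push_cast [ZMod.natCast_val]; simp),
        pow_val_eq hb _ (m.toAdd.2.1.val + m'.toAdd.2.1.val)
          (by push_cast [ZMod.natCast_val]; simp),
        pow_val_eq hc _ (m.toAdd.2.2.val + m'.toAdd.2.2.val)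
          (by push_cast [ZMod.natCast_val]; simp)]
    exact (reorder3 hab hac ((hbc : Commute c b).symm) _ _ _ _ _ _).symm
  let φ : M16 →* H := ⟨⟨f, hf1⟩, hfmul⟩
  have hsurj : Function.Surjective φ := by
    have hrange : ∀ x ∈ ({a, b, c} : Set H), x ∈ φ.range := by
      simp only [Set.mem_insert_iff, Set.mem_singleton_iff]
      rintro x (rfl|rfl|rfl)
      · exact ⟨Multiplicative.ofAdd ((1 : ZMod 4), 0, 0), by simp [φ, f,
          show (1 : ZMod 4).val = 1 from rfl,
          show (1 : ZMod 2).val = 1 from rfl]⟩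
      · exact ⟨Multiplicative.ofAdd (0, (1 : ZMod 2), 0), by simp [φ, f,
          show (1 : ZMod 4).val = 1 from rfl,
          show (1 : ZMod 2).val = 1 from rfl]⟩
      · exact ⟨Multiplicative.ofAdd (0, 0, (1 : ZMod 2)), by simp [φ, f,
          show (1 : ZMod 4).val = 1 from rfl,
          show (1 : ZMod 2).val = 1 from rfl]⟩
    have : (⊤ : Subgroup H) ≤ φ.range := by
      rw [← gen]; exact (Subgroup.closure_le _).2 hrange
    exact MonoidHom.range_eq_top.1 (le_antisymm le_top this)
  haveI : Fintype H := Fintype.ofEquiv _ e.symm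
  have hbij : Function.Bijective φ := by
    refine (Fintype.bijective_iff_surjective_and_card φ).2 ⟨hsurj, ?_⟩
    have : Fintype.card H = 16 := by
      rw [← Nat.card_eq_fintype_card, hcard]
    rw [this]
    decide
  exact ⟨MulEquiv.ofBijective φ hbij⟩

lemma reorder3' {H : Type*} [Group H] {a b c : H}
    (hab : Commute a b) (hac : Commute a c)
    (hswap : ∀ r q' : ℕ, r < 2 → q' < 2 →
      c ^ r * b ^ q' = a ^ (2 * (r * q')) * (b ^ q' * c ^ r))
    (p q r p' q' r' : ℕ) (hr : r < 2) (hq' : q' < 2) :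
    (a ^ p * b ^ q * c ^ r) * (a ^ p' * b ^ q' * c ^ r') =
      a ^ (p + p' + 2 * (r * q')) * b ^ (q + q') * c ^ (r + r') := by
  have h1 : Commute (b ^ q * c ^ r) (a ^ p') :=
    ((hab.symm.pow_pow q p').mul_left (hac.symm.pow_pow r p'))
  have hba : Commute (b ^ q) (a ^ (2 * (r * q'))) := hab.symm.pow_pow _ _
  calc a ^ p * b ^ q * c ^ r * (a ^ p' * b ^ q' * c ^ r')
      = a ^ p * (b ^ q * c ^ r) * (a ^ p' * (b ^ q' * c ^ r')) := by
        rw [mul_assoc (a ^ p), mul_assoc (a ^ p')]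
    _ = a ^ p * a ^ p' * (b ^ q * c ^ r * (b ^ q' * c ^ r')) := h1.mul_mul_mul_comm _ _
    _ = a ^ p * a ^ p' * (b ^ q * ((c ^ r * b ^ q') * c ^ r')) := by
        rw [mul_assoc (b ^ q), ← mul_assoc (c ^ r)]
    _ = a ^ p * a ^ p' * (b ^ q * (a ^ (2 * (r * q')) * (b ^ q' * c ^ r) * c ^ r')) := by
        rw [hswap r q' hr hq']
    _ = a ^ p * a ^ p' * (a ^ (2 * (r * q')) * (b ^ q * (b ^ q' * (c ^ r * c ^ r')))) := by
        rw [mul_assoc (a ^ (2 * (r * q'))), ← mul_assoc (b ^ q), hba.eq]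
        simp [mul_assoc]
    _ = a ^ (p + p' + 2 * (r * q')) * b ^ (q + q') * c ^ (r + r') := by
        rw [pow_add, pow_add, pow_add, pow_add]
        simp [mul_assoc]

lemma exists_iso_T16 {H : Type*} [Group H] {a b c : H} (hH : IsC4xC2SemidirectC2 a b c)
    (e : H ≃ Fin 16) : Nonempty (T16 ≃* H) := by
  obtain ⟨hcard, ha, hb, hc, hab, hac, hbc, gen⟩ := hH
  have hswap : ∀ r q' : ℕ, r < 2 → q' < 2 →
      c ^ r * b ^ q' = a ^ (2 * (r * q')) * (b ^ q' * c ^ r) := by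
    intro r q' hr hq'
    interval_cases r <;> interval_cases q' <;> simp
    calc c * b = c * b * c⁻¹ * c := by group
      _ = a ^ 2 * b * c := by rw [hbc]
      _ = a ^ 2 * (b * c) := by rw [mul_assoc]
  let f : T16 → H := fun t => a ^ (t.1.val) * b ^ (t.2.1.val) * c ^ (t.2.2.val)
  have hf1 : f 1 = 1 := by
    show a ^ (0 : ZMod 4).val * b ^ (0 : ZMod 2).val * c ^ (0 : ZMod 2).val = 1
    simp
  have hfmul : ∀ x y : T16, f (x * y) = f x * f y := by
    intro x y
    show a ^ ((x.1 + y.1 + T16.twist x.2.2 y.2.1).val) * b ^ ((x.2.1 + y.2.1).val)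
        * c ^ ((x.2.2 + y.2.2).val) = _
    rw [pow_val_eq ha _ (x.1.val + y.1.val + 2 * (x.2.2.val * y.2.1.val))
          (by push_cast [ZMod.natCast_val, ZMod.cast_id, T16.twist]; ring),
        pow_val_eq hb _ (x.2.1.val + y.2.1.val)
          (by push_cast [ZMod.natCast_val, ZMod.cast_id]; ring),
        pow_val_eq hc _ (x.2.2.val + y.2.2.val)
          (by push_cast [ZMod.natCast_val, ZMod.cast_id]; ring)]
    exact (reorder3' hab hac hswap _ _ _ _ _ _ x.2.2.val_lt y.2.1.val_lt).symm
  let φ : T16 →* H := ⟨⟨f, hf1⟩, hfmul⟩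
  have hsurj : Function.Surjective φ := by
    have hA : a ∈ φ.range := ⟨((1 : ZMod 4), 0, 0), by
      show a ^ (1 : ZMod 4).val * b ^ (0 : ZMod 2).val * c ^ (0 : ZMod 2).val = a
      simp [show (1 : ZMod 4).val = 1 from rfl]⟩
    have hB : b ∈ φ.range := ⟨((0 : ZMod 4), 1, 0), by
      show a ^ (0 : ZMod 4).val * b ^ (1 : ZMod 2).val * c ^ (0 : ZMod 2).val = b
      simp [show (1 : ZMod 2).val = 1 from rfl]⟩
    have hC : c ∈ φ.range := ⟨((0 : ZMod 4), 0, 1), by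
      show a ^ (0 : ZMod 4).val * b ^ (0 : ZMod 2).val * c ^ (1 : ZMod 2).val = c
      simp [show (1 : ZMod 2).val = 1 from rfl]⟩
    have hrange : ∀ x ∈ ({a, b, c} : Set H), x ∈ φ.range := by
      simp only [Set.mem_insert_iff, Set.mem_singleton_iff]
      rintro x (rfl|rfl|rfl) <;> assumption
    have : (⊤ : Subgroup H) ≤ φ.range := by
      rw [← gen]; exact (Subgroup.closure_le _).2 hrange
    exact MonoidHom.range_eq_top.1 (le_antisymm le_top this)
  haveI : Fintype H := Fintype.ofEquiv _ e.symm
  have hbij : Function.Bijective φ := by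
    refine (Fintype.bijective_iff_surjective_and_card φ).2 ⟨hsurj, ?_⟩
    have : Fintype.card H = 16 := by rw [← Nat.card_eq_fintype_card, hcard]
    rw [this]
    decide
  exact ⟨MulEquiv.ofBijective φ hbij⟩

/-! ### Gassmann equivalence from an order-preserving bijection -/

lemma regularEmbedding_injective {K : Type*} [Group K] {n : ℕ} (e : K ≃ Fin n) :
    Function.Injective (regularEmbedding e) := by
  intro x y hxy
  have := congrArg (fun σ : Equiv.Perm (Fin n) => e.symm (σ (e 1))) hxy
  simpa [regularEmbedding] using this

lemma conjStable_mem {G : Type*} [Group G] {S : Set G} (hS : ConjStable S) {u v : G}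
    (h : IsConj u v) (hu : u ∈ S) : v ∈ S := by
  obtain ⟨g, hg⟩ := isConj_iff.1 h
  rw [← hS g]
  exact ⟨u, hu, hg⟩

lemma gassmann_of_order_bij {G G' : Type*} [Group G] [Group G'] [Finite G] [Finite G']
    {n : ℕ} (e : G ≃ Fin n) (e' : G' ≃ Fin n) (β : G ≃ G')
    (hβ : ∀ g, orderOf (β g) = orderOf g) :
    GassmannEquivalent (regularEmbedding e).range (regularEmbedding e').range := by
  intro S hS
  have hmem : ∀ g : G, regularEmbedding e g ∈ S ↔ regularEmbedding e' (β g) ∈ S := by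
    intro g
    constructor
    · exact conjStable_mem hS (isConj_regularEmbedding e e' (hβ g).symm)
    · exact conjStable_mem hS (isConj_regularEmbedding e' e (hβ g))
  have h1 : (((regularEmbedding e).range : Subgroup _) : Set (Equiv.Perm (Fin n))) ∩ S
      = regularEmbedding e '' {g : G | regularEmbedding e g ∈ S} := by
    ext σ
    constructor
    · rintro ⟨hr, hs⟩
      obtain ⟨g, rfl⟩ := hr
      exact ⟨g, hs, rfl⟩
    · rintro ⟨g, hg, rfl⟩
      exact ⟨⟨g, rfl⟩, hg⟩
  have h2 : (((regularEmbedding e').range : Subgroup _) : Set (Equiv.Perm (Fin n))) ∩ S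
      = regularEmbedding e' '' {g : G' | regularEmbedding e' g ∈ S} := by
    ext σ
    constructor
    · rintro ⟨hr, hs⟩
      obtain ⟨g, rfl⟩ := hr
      exact ⟨g, hs, rfl⟩
    · rintro ⟨g, hg, rfl⟩
      exact ⟨⟨g, rfl⟩, hg⟩
  rw [h1, h2,
    Set.ncard_image_of_injective _ (regularEmbedding_injective e),
    Set.ncard_image_of_injective _ (regularEmbedding_injective e')]
  have himg : β '' {g : G | regularEmbedding e g ∈ S}
      = {g : G' | regularEmbedding e' g ∈ S} := by
    ext g'
    constructor
    · rintro ⟨g, hg, rfl⟩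
      exact (hmem g).1 hg
    · intro hg'
      refine ⟨β.symm g', ?_, β.apply_symm_apply g'⟩
      have := (hmem (β.symm g')).2
      rw [β.apply_symm_apply] at this
      exact this hg'
  rw [← himg, Set.ncard_image_of_injective _ β.injective]

lemma range_inter_sq {G : Type*} [Group G] {n : ℕ} (e : G ≃ Fin n) :
    (((regularEmbedding e).range : Subgroup _) : Set (Equiv.Perm (Fin n)))
        ∩ {σ : Equiv.Perm (Fin n) | σ ^ 2 = 1}
      = regularEmbedding e '' {x : G | x ^ 2 = 1} := by
  ext σ
  constructor
  · rintro ⟨hr, hs⟩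
    obtain ⟨x, rfl⟩ := hr
    refine ⟨x, ?_, rfl⟩
    have h1 : regularEmbedding e (x ^ 2) = regularEmbedding e 1 := by
      rw [map_pow, map_one]
      exact hs
    exact regularEmbedding_injective e h1
  · rintro ⟨x, hx, rfl⟩
    refine ⟨⟨x, rfl⟩, ?_⟩
    show _ ^ 2 = 1
    rw [← map_pow, hx, map_one]

end AuxTodd


/-- with `H = (C₄ × C₂) × C₂` and `H' = (C₄ × C₂) ⋊ C₂` (Todd-type groups of
order 16, pinned down by generators and relations), the images of `H` and `H'` under regular
embeddings into `Perm (Fin 16)` are Gassmann-Sunada equivalent but NOT jump equivalent; in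
fact the elements of order dividing 2 generate a subgroup of index 2 in `H`, whereas they
generate all of `H'`. -/
theorem todd_gassmann_not_jump
    {H H' : Type*} [Group H] [Group H']
    (a b c : H) (hH : IsC4xC2xC2 a b c)
    (a' b' c' : H') (hH' : IsC4xC2SemidirectC2 a' b' c')
    (e : H ≃ Fin 16) (e' : H' ≃ Fin 16) :
    GassmannEquivalent (regularEmbedding e).range (regularEmbedding e').range ∧
    ¬ JumpEquivalent (regularEmbedding e).range (regularEmbedding e').range ∧
    (Subgroup.closure {x : H | x ^ 2 = 1}).index = 2 ∧
    Subgroup.closure {x : H' | x ^ 2 = 1} = ⊤ := by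
  haveI : Finite H := Finite.of_equiv _ e.symm
  haveI : Finite H' := Finite.of_equiv _ e'.symm
  obtain ⟨ψ⟩ := exists_iso_M16 hH e
  obtain ⟨ψ'⟩ := exists_iso_T16 hH' e'
  -- Statement (3): the involutions of `H` generate an index 2 subgroup
  have hsetH : {x : H | x ^ 2 = 1} = ((K₀.map ψ.toMonoidHom : Subgroup H) : Set H) := by
    ext x
    simp only [Set.mem_setOf_eq, SetLike.mem_coe, Subgroup.mem_map]
    constructor
    · intro hx
      refine ⟨ψ.symm x, ?_, by simp⟩
      rw [K₀_mem]
      have : ψ ((ψ.symm x) ^ 2) = ψ 1 := by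
        rw [map_pow, map_one, MulEquiv.apply_symm_apply, hx]
      exact ψ.injective this
    · rintro ⟨m, hm, rfl⟩
      show (ψ.toMonoidHom m) ^ 2 = 1
      rw [← map_pow, (K₀_mem m).1 hm, map_one]
  have h3 : (Subgroup.closure {x : H | x ^ 2 = 1}).index = 2 := by
    rw [hsetH, Subgroup.closure_eq,
      Subgroup.index_map_eq _ ψ.surjective
        (by rw [(MonoidHom.ker_eq_bot_iff _).2 ψ.injective]; exact bot_le),
      K₀_index]
  -- Statement (4): the involutions of `H'` generate everything
  have h4 : Subgroup.closure {x : H' | x ^ 2 = 1} = ⊤ := by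
    obtain ⟨hcard, ha, hb, hc, hab, hac, hbc, gen⟩ := hH'
    have Cab : Commute a' b' := hab
    have hcc : c' * c' = 1 := by rw [← sq]; exact hc
    have hbb : b' * b' = 1 := by rw [← sq]; exact hb
    have h1 : c' * b' = a' ^ 2 * (b' * c') := by
      calc c' * b' = c' * b' * c'⁻¹ * c' := by group
        _ = a' ^ 2 * b' * c' := by rw [hbc]
        _ = a' ^ 2 * (b' * c') := by rw [mul_assoc]
    have habc : (a' * b' * c') ^ 2 = 1 := by
      have : a' * b' * c' * (a' * b' * c') = 1 := by
        calc a' * b' * c' * (a' * b' * c')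
            = a' * (b' * ((c' * a') * (b' * c'))) := by simp [mul_assoc]
          _ = a' * (b' * (a' * (c' * (b' * c')))) := by rw [← hac]; simp [mul_assoc]
          _ = a' * (a' * (b' * (c' * (b' * c')))) := by
              rw [← mul_assoc b' a', ← hab, mul_assoc a' b']
          _ = a' * (a' * (b' * ((c' * b') * c'))) := by simp [mul_assoc]
          _ = a' * (a' * (b' * (a' ^ 2 * (b' * (c' * c'))))) := by
              rw [h1]; simp [mul_assoc]
          _ = a' * (a' * (b' * (a' ^ 2 * b'))) := by rw [hcc, mul_one]
          _ = a' * (a' * (a' ^ 2 * (b' * b'))) := by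
              rw [← mul_assoc b' (a' ^ 2), (Cab.symm.pow_right 2).eq, mul_assoc]
          _ = a' * (a' * a' ^ 2) := by rw [hbb, mul_one]
          _ = a' ^ 4 := by group
          _ = 1 := ha
      rw [sq]
      exact this
    have hmb : b' ∈ Subgroup.closure {x : H' | x ^ 2 = 1} :=
      Subgroup.subset_closure hb
    have hmc : c' ∈ Subgroup.closure {x : H' | x ^ 2 = 1} :=
      Subgroup.subset_closure hc
    have hmabc : a' * b' * c' ∈ Subgroup.closure {x : H' | x ^ 2 = 1} :=
      Subgroup.subset_closure habc
    have hma : a' ∈ Subgroup.closure {x : H' | x ^ 2 = 1} := by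
      have : a' = a' * b' * c' * c' * b' := by
        rw [mul_assoc (a' * b'), hcc, mul_one, mul_assoc, hbb, mul_one]
      rw [this]
      exact mul_mem (mul_mem hmabc hmc) hmb
    rw [eq_top_iff, ← gen]
    refine (Subgroup.closure_le _).2 ?_
    rintro x hx
    simp only [Set.mem_insert_iff, Set.mem_singleton_iff] at hx
    rcases hx with rfl | rfl | rfl
    · exact hma
    · exact hmb
    · exact hmc
  -- Order-preserving bijection between `H` and `H'`
  let β : H ≃ H' := (ψ.toEquiv.symm.trans bM).trans ψ'.toEquiv
  have hβ : ∀ x : H, orderOf (β x) = orderOf x := by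
    intro x
    have t1 : orderOf (ψ' (bM (ψ.symm x))) = orderOf (bM (ψ.symm x)) :=
      ψ'.orderOf_eq _
    have t2 : orderOf (bM (ψ.symm x)) = orderOf (ψ.symm x) :=
      orderOf_eq_of (T16_pow4 _) (M16_pow4 _) (bM_one _) (bM_sq _)
    have t3 : orderOf (ψ.symm x) = orderOf x := ψ.symm.orderOf_eq x
    show orderOf (ψ' (bM (ψ.symm x))) = orderOf x
    rw [t1, t2, t3]
  have hGass : GassmannEquivalent (regularEmbedding e).range (regularEmbedding e').range :=
    gassmann_of_order_bij e e' β hβ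
  -- Not jump equivalent
  have hCS : ConjStable {σ : Equiv.Perm (Fin 16) | σ ^ 2 = 1} := by
    intro g
    ext σ
    constructor
    · rintro ⟨τ, hτ, rfl⟩
      show (g * τ * g⁻¹) ^ 2 = 1
      have hτ1 : τ ^ 2 = 1 := hτ
      rw [conj_pow, hτ1, mul_one, mul_inv_cancel]
    · intro hσ
      refine ⟨g⁻¹ * σ * g, ?_, by group⟩
      show (g⁻¹ * σ * g) ^ 2 = 1
      have hσ1 : σ ^ 2 = 1 := hσ
      have hgg : (g⁻¹ * σ * g) ^ 2 = g⁻¹ * σ ^ 2 * g⁻¹⁻¹ := by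
        rw [← conj_pow]
        rw [inv_inv]
      rw [hgg, hσ1, mul_one, inv_inv, inv_mul_cancel]
  have hCU : ConjStable (Set.univ : Set (Equiv.Perm (Fin 16))) := by
    intro g
    ext σ
    simp only [Set.image_univ, Set.mem_range, Set.mem_univ, iff_true]
    exact ⟨g⁻¹ * σ * g, by group⟩
  have hnj : ¬ JumpEquivalent (regularEmbedding e).range (regularEmbedding e').range := by
    intro hJ
    have hiff := hJ {σ : Equiv.Perm (Fin 16) | σ ^ 2 = 1} Set.univ hCS hCU
    have hR : Subgroup.closure
          (((regularEmbedding e').range : Set (Equiv.Perm (Fin 16)))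
            ∩ {σ : Equiv.Perm (Fin 16) | σ ^ 2 = 1})
        = Subgroup.closure
          (((regularEmbedding e').range : Set (Equiv.Perm (Fin 16))) ∩ Set.univ) := by
      rw [Set.inter_univ, Subgroup.closure_eq, range_inter_sq e',
        ← MonoidHom.map_closure, h4, ← MonoidHom.range_eq_map]
    have hL := hiff.2 hR
    rw [Set.inter_univ, Subgroup.closure_eq, range_inter_sq e,
      ← MonoidHom.map_closure, MonoidHom.range_eq_map] at hL
    have hTop : Subgroup.closure {x : H | x ^ 2 = 1} = ⊤ :=
      Subgroup.map_injective (regularEmbedding_injective e) hL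
    rw [hTop, Subgroup.index_top] at h3
    omega
  exact ⟨hGass, hnj, h3, h4⟩
end

section
/- Let k be a finite field, let V be a finite-dimensional k-vector space of dimension at least 1, and let G = V ⋊ GL(V) be the affine group of V (with multiplication (v,g)(v',g') = (v + g v', g g')). Then any two nonzero k-subspaces V₁ and V₂ of V, viewed as subgroups of G via v ↦ (v, 1), are jump equivalent in G. Moreover, if dim V₁ ≠ dim V₂, then V₁ and V₂ are not Gassmann-Sunada equivalent in G; hence (G, V₁, V₂) is a jump triple that is not a Gassmann-Sunada triple. -/
section Aux

variable {k : Type*} [Field k] {V : Type*} [AddCommGroup V] [Module k V]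

lemma exists_linearEquiv_apply_eq [FiniteDimensional k V] {v w : V} (hv : v ≠ 0) (hw : w ≠ 0) :
    ∃ g : V ≃ₗ[k] V, g v = w := by
  classical
  have hv' : LinearIndepOn k id ({v} : Set V) := LinearIndepOn.singleton hv
  have hw' : LinearIndepOn k id ({w} : Set V) := LinearIndepOn.singleton hw
  let b₁ := Module.Basis.extend hv'
  let b₂ := Module.Basis.extend hw'
  haveI : Fintype (hv'.extend (Set.subset_univ _)) := FiniteDimensional.fintypeBasisIndex b₁
  haveI : Fintype (hw'.extend (Set.subset_univ _)) := FiniteDimensional.fintypeBasisIndex b₂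
  have hmemv : v ∈ hv'.extend (Set.subset_univ _) := hv'.subset_extend _ rfl
  have hmemw : w ∈ hw'.extend (Set.subset_univ _) := hw'.subset_extend _ rfl
  have hcard : Fintype.card (hv'.extend (Set.subset_univ _))
      = Fintype.card (hw'.extend (Set.subset_univ _)) := by
    rw [← Module.finrank_eq_card_basis b₁, ← Module.finrank_eq_card_basis b₂]
  let e := Fintype.equivOfCardEq hcard
  let e' := e.trans (Equiv.swap (e ⟨v, hmemv⟩) ⟨w, hmemw⟩)
  refine ⟨b₁.equiv b₂ e', ?_⟩
  have h1 : b₁ ⟨v, hmemv⟩ = v := Module.Basis.extend_apply_self hv' _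
  have h2 : b₂ ⟨w, hmemw⟩ = w := Module.Basis.extend_apply_self hw' _
  have h3 := b₁.equiv_apply ⟨v, hmemv⟩ b₂ e'
  rw [h1] at h3
  have h4 : e' ⟨v, hmemv⟩ = ⟨w, hmemw⟩ := by
    simp only [e', Equiv.trans_apply, Equiv.swap_apply_left]
  rw [h3, h4, h2]

lemma conj_constVAdd (g : V ≃ₗ[k] V) (v : V) :
    g.toAffineEquiv * AffineEquiv.constVAdd k V v * (g.toAffineEquiv)⁻¹
      = AffineEquiv.constVAdd k V (g v) := by
  ext x
  simp [AffineEquiv.mul_def, AffineEquiv.constVAdd, map_add, AffineEquiv.inv_def,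
    LinearEquiv.toAffineEquiv, AffineEquiv.symm]
  show g (v +ᵥ g.symm x) = g v +ᵥ x
  simp [vadd_eq_add, map_add]

lemma constVAdd_injective : Function.Injective (AffineEquiv.constVAdd k V) := by
  intro a b h
  have := congrArg (fun e : V ≃ᵃ[k] V => e 0) h
  simpa using this

lemma constVAdd_eq_one_iff {v : V} : AffineEquiv.constVAdd k V v = 1 ↔ v = 0 := by
  constructor
  · intro h
    have := congrArg (fun e : V ≃ᵃ[k] V => e 0) h
    simpa [AffineEquiv.one_def] using this
  · rintro rfl
    rw [AffineEquiv.constVAdd_zero]; rfl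

end Aux

/-- let `k` be a finite field and `V` a `k`-vector space of dimension at
least 1, and let `G` be the affine group of `V` (realized as the group of affine
self-equivalences of `V`).  Any two nonzero subspaces `W₁`, `W₂` of `V`, viewed as subgroups
of translations `{constVAdd w : w ∈ Wᵢ}` of `G`, are jump equivalent in `G`; and if
`dim W₁ ≠ dim W₂` they are not Gassmann-Sunada equivalent, so `(G, W₁, W₂)` is a jump triple
that is not a Gassmann-Sunada triple. -/
theorem translation_subspaces_jump_not_gassmann {k : Type*} [Field k] [Fintype k]
    {V : Type*} [AddCommGroup V] [Module k V] [FiniteDimensional k V]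
    (hd : 1 ≤ Module.finrank k V)
    (W₁ W₂ : Submodule k V) (hW₁ : W₁ ≠ ⊥) (hW₂ : W₂ ≠ ⊥)
    (A₁ A₂ : Subgroup (V ≃ᵃ[k] V))
    (hA₁ : ∀ f : V ≃ᵃ[k] V, f ∈ A₁ ↔ ∃ w ∈ W₁, f = AffineEquiv.constVAdd k V w)
    (hA₂ : ∀ f : V ≃ᵃ[k] V, f ∈ A₂ ↔ ∃ w ∈ W₂, f = AffineEquiv.constVAdd k V w) :
    JumpEquivalent A₁ A₂ ∧
      (Module.finrank k W₁ ≠ Module.finrank k W₂ → ¬ GassmannEquivalent A₁ A₂) := by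
  classical
  haveI : Finite V := Module.finite_of_finite k
  -- transitivity: a conj-stable set containing one nonzero translation contains all
  have trans_mem : ∀ S : Set (V ≃ᵃ[k] V), ConjStable S → ∀ v₀ v : V, v₀ ≠ 0 → v ≠ 0 →
      AffineEquiv.constVAdd k V v₀ ∈ S → AffineEquiv.constVAdd k V v ∈ S := by
    intro S hS v₀ v h₀ h hmem
    obtain ⟨g, hg⟩ := exists_linearEquiv_apply_eq (k := k) h₀ h
    rw [← hS g.toAffineEquiv]
    exact ⟨_, hmem, by simp only []; rw [conj_constVAdd, hg]⟩
  set P : Set (V ≃ᵃ[k] V) → Prop :=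
    fun S => ∃ v : V, v ≠ 0 ∧ AffineEquiv.constVAdd k V v ∈ S with hP
  -- closure computation
  have hclos : ∀ (W : Submodule k V) (A : Subgroup (V ≃ᵃ[k] V)),
      (∀ f, f ∈ A ↔ ∃ w ∈ W, f = AffineEquiv.constVAdd k V w) → W ≠ ⊥ →
      ∀ S : Set (V ≃ᵃ[k] V), ConjStable S →
        Subgroup.closure ((A : Set (V ≃ᵃ[k] V)) ∩ S) = if P S then A else ⊥ := by
    intro W A hA hW S hS
    by_cases hPS : P S
    · rw [if_pos hPS]
      obtain ⟨v₀, hv₀, hv₀S⟩ := hPS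
      apply le_antisymm
      · exact (Subgroup.closure_le _).mpr Set.inter_subset_left
      · intro a ha
        obtain ⟨w, hw, rfl⟩ := (hA a).1 ha
        by_cases hw0 : w = 0
        · subst hw0
          rw [constVAdd_eq_one_iff.2 rfl]
          exact Subgroup.one_mem _
        · exact Subgroup.subset_closure ⟨ha, trans_mem S hS v₀ w hv₀ hw0 hv₀S⟩
    · rw [if_neg hPS]
      refine le_antisymm ((Subgroup.closure_le _).mpr ?_) bot_le
      rintro a ⟨haA, haS⟩
      obtain ⟨w, hw, rfl⟩ := (hA a).1 haA
      have hw0 : w = 0 := by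
        by_contra h
        exact hPS ⟨w, h, haS⟩
      subst hw0
      simp [constVAdd_eq_one_iff.2 rfl]
  have hA₁ne : A₁ ≠ ⊥ := by
    obtain ⟨w, hw, hw0⟩ := Submodule.exists_mem_ne_zero_of_ne_bot hW₁
    intro h
    have : AffineEquiv.constVAdd k V w ∈ A₁ := (hA₁ _).2 ⟨w, hw, rfl⟩
    rw [h, Subgroup.mem_bot] at this
    exact hw0 (constVAdd_eq_one_iff.1 this)
  have hA₂ne : A₂ ≠ ⊥ := by
    obtain ⟨w, hw, hw0⟩ := Submodule.exists_mem_ne_zero_of_ne_bot hW₂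
    intro h
    have : AffineEquiv.constVAdd k V w ∈ A₂ := (hA₂ _).2 ⟨w, hw, rfl⟩
    rw [h, Subgroup.mem_bot] at this
    exact hw0 (constVAdd_eq_one_iff.1 this)
  constructor
  · intro S T hS hT
    rw [hclos W₁ A₁ hA₁ hW₁ S hS, hclos W₁ A₁ hA₁ hW₁ T hT,
      hclos W₂ A₂ hA₂ hW₂ S hS, hclos W₂ A₂ hA₂ hW₂ T hT]
    by_cases hPS : P S <;> by_cases hPT : P T <;>
      simp [hPS, hPT, hA₁ne, hA₂ne, hA₁ne.symm, hA₂ne.symm]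
  · intro hne hG
    have hUniv : ConjStable (Set.univ : Set (V ≃ᵃ[k] V)) := by
      intro g
      exact Set.eq_univ_of_forall fun x => ⟨g⁻¹ * x * g, Set.mem_univ _, by group⟩
    have h := hG Set.univ hUniv
    rw [Set.inter_univ, Set.inter_univ] at h
    -- card of Aᵢ equals card of Wᵢ
    have hcard : ∀ (W : Submodule k V) (A : Subgroup (V ≃ᵃ[k] V)),
        (∀ f, f ∈ A ↔ ∃ w ∈ W, f = AffineEquiv.constVAdd k V w) →
        Nat.card W = Nat.card A := by
      intro W A hA
      refine Nat.card_eq_of_bijective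
        (fun w : W => ⟨AffineEquiv.constVAdd k V w, (hA _).2 ⟨w, w.2, rfl⟩⟩) ⟨?_, ?_⟩
      · intro a b hab
        exact Subtype.ext (constVAdd_injective (congrArg Subtype.val hab))
      · rintro ⟨f, hf⟩
        obtain ⟨w, hw, rfl⟩ := (hA f).1 hf
        exact ⟨⟨w, hw⟩, rfl⟩
    have h1 : Nat.card W₁ = Nat.card W₂ := by
      rw [hcard W₁ A₁ hA₁, hcard W₂ A₂ hA₂]
      have e1 : Set.ncard (A₁ : Set (V ≃ᵃ[k] V)) = Nat.card A₁ :=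
        (Nat.card_coe_set_eq _).symm
      have e2 : Set.ncard (A₂ : Set (V ≃ᵃ[k] V)) = Nat.card A₂ :=
        (Nat.card_coe_set_eq _).symm
      rw [← e1, ← e2, h]
    haveI : Fintype W₁ := Fintype.ofFinite _
    haveI : Fintype W₂ := Fintype.ofFinite _
    rw [Nat.card_eq_fintype_card, Nat.card_eq_fintype_card,
      Module.card_eq_pow_finrank (K := k) (V := W₁), Module.card_eq_pow_finrank (K := k) (V := W₂)] at h1
    exact hne (Nat.pow_right_injective Fintype.one_lt_card h1)
end

section
/- Let G be a finitely generated group and let m : G → ℝ≥0 be a length map whose image is a closed and discrete subset of ℝ. Then the jump set Jump(Fil_m^• G) is finite, and every element of the jump set is a value attained by m. -/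
/-- `m : G → ℝ` is a length map: positive away from `1`, conjugation invariant,
and `m (g ^ k) ≤ |k| * m g`.  (Nonnegativity records that `m` takes values in `ℝ≥0`.) -/
structure IsLengthMap {G : Type*} [Group G] (m : G → ℝ) : Prop where
  nonneg : ∀ g : G, 0 ≤ m g
  pos : ∀ g : G, g ≠ 1 → 0 < m g
  conj_invariant : ∀ g h : G, m (h * g * h⁻¹) = m g
  pow_le : ∀ (k : ℤ) (g : G), m (g ^ k) ≤ |(k : ℝ)| * m g

/-- `Fil m δ` is the subgroup generated by the elements of length `< δ`. -/
def Fil {G : Type*} [Group G] (m : G → ℝ) (δ : ℝ) : Subgroup G :=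
  Subgroup.closure {g : G | m g < δ}

/-- The jump set of the filtration induced by a length map `m`. -/
def JumpSet {G : Type*} [Group G] (m : G → ℝ) : Set ℝ :=
  {δ : ℝ | 0 < δ ∧ ∀ ε : ℝ, δ < ε → Fil m δ ≠ Fil m ε}

/-- if `G` is a finitely generated group and `m` is a length map on `G` whose
image is a closed and discrete subset of `ℝ`, then the jump set of the filtration induced
by `m` is finite and every jump is a value attained by `m`. -/
theorem jumpSet_finite_of_fg_of_closed_discrete {G : Type*} [Group G]
    (hfg : Group.FG G) (m : G → ℝ) (hm : IsLengthMap m)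
    (hclosed : IsClosed (Set.range m)) (hdiscrete : DiscreteTopology (Set.range m)) :
    (JumpSet m).Finite ∧ JumpSet m ⊆ Set.range m := by
  -- Every jump is attained by `m`.
  have hrange : JumpSet m ⊆ Set.range m := by
    intro δ hδ
    by_contra hne
    obtain ⟨ε, hε, hball⟩ := Metric.isOpen_iff.mp hclosed.isOpen_compl δ hne
    apply hδ.2 (δ + ε) (by linarith)
    have hset : {g : G | m g < δ} = {g : G | m g < δ + ε} := by
      ext g
      simp only [Set.mem_setOf_eq]
      constructor
      · intro h; linarith
      · intro h
        by_contra h'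
        push_neg at h'
        have hmem : m g ∈ Metric.ball δ ε := by
          rw [Metric.mem_ball, Real.dist_eq, abs_lt]
          constructor <;> linarith
        exact hball hmem (Set.mem_range_self g)
    unfold Fil
    rw [hset]
  -- A bound beyond which the filtration is all of `G`.
  obtain ⟨S, hS⟩ := hfg.out
  obtain ⟨B, hB⟩ := (S.finite_toSet.image m).bddAbove
  have hBmem : ∀ s ∈ S, m s ≤ B := fun s hs => hB ⟨s, hs, rfl⟩
  have htop : ∀ δ : ℝ, B + 1 ≤ δ → Fil m δ = ⊤ := by
    intro δ hδ
    refine top_unique ?_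
    rw [← hS]
    apply Subgroup.closure_mono
    intro s hs
    have := hBmem s hs
    show m s < δ
    linarith
  have hsub : JumpSet m ⊆ Set.range m ∩ Set.Icc 0 (B + 1) := by
    intro δ hδ
    refine ⟨hrange hδ, le_of_lt hδ.1, ?_⟩
    by_contra h
    push_neg at h
    exact hδ.2 (δ + 1) (by linarith)
      ((htop δ (by linarith)).trans (htop (δ + 1) (by linarith)).symm)
  have hdisc2 : DiscreteTopology ↥(Set.range m ∩ Set.Icc 0 (B + 1)) :=
    DiscreteTopology.of_subset hdiscrete Set.inter_subset_left
  have hcompact : IsCompact (Set.range m ∩ Set.Icc 0 (B + 1)) :=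
    isCompact_Icc.inter_left hclosed
  exact ⟨(hcompact.finite (isDiscrete_iff_discreteTopology.mpr hdisc2)).subset hsub, hrange⟩
end
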